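/- Let (W_i)_{i≥1} be i.i.d. nonnegative random variables with E[W_1] = ∞, let (c_n) be positive reals with c_{n+1}/c_n → m for some m > 1, and let 1 < a and 1 < b < m. Then d_n := e^{(b^n − 1)/c_n} · P(Σ_{i=1}^{⌊a^n⌋} W_i ≤ a^n) tends to 0 as n → ∞. -/

import Mathlib

open MeasureTheory ProbabilityTheory Filter Set
open scoped Topology ENNReal

/-- Let `(W i)` be i.i.d. nonnegative random variables with `E[W 0] = ∞`, let `(c n)` be
positive reals with `c (n+1) / c n → m` for some `m > 1`, and let `1 < a` and `1 < b < m`.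
Then `d n := e^{(b^n - 1)/c n} · P(Σ_{i < ⌊a^n⌋} W i ≤ a^n)` tends to `0` as `n → ∞`. -/
theorem exp_mul_prob_sum_le_tendsto_zero
    {Ω : Type*} [MeasurableSpace Ω] (μ : Measure Ω) [IsProbabilityMeasure μ]
    (W : ℕ → Ω → ℝ) (hW_meas : ∀ i, Measurable (W i))
    (hW_nonneg : ∀ i x, 0 ≤ W i x)
    (hW_indep : iIndepFun W μ)
    (hW_ident : ∀ i, IdentDistrib (W i) (W 0) μ μ)
    (hW_infinite_mean : ∫⁻ x, ENNReal.ofReal (W 0 x) ∂μ = ⊤)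
    (c : ℕ → ℝ) (hc_pos : ∀ n, 0 < c n)
    (m : ℝ) (hm : 1 < m)
    (hc_ratio : Tendsto (fun n => c (n + 1) / c n) atTop (nhds m))
    (a b : ℝ) (ha : 1 < a) (hb : 1 < b) (hbm : b < m) :
    Tendsto
      (fun n => Real.exp ((b ^ n - 1) / c n) *
        (μ {x | ∑ i ∈ Finset.range ⌊a ^ n⌋₊, W i x ≤ a ^ n}).toReal)
      atTop (nhds 0) := by
  set A : ℕ → Set Ω := fun n => {x | ∑ i ∈ Finset.range ⌊a ^ n⌋₊, W i x ≤ a ^ n} with hA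
  have hA_mble : ∀ n, MeasurableSet (A n) := fun n =>
    measurableSet_le (Finset.measurable_sum _ fun i _ => hW_meas i) measurable_const
  have hb0 : (0:ℝ) < b := lt_trans one_pos hb
  -- Step 1: choose a truncation level K with truncated mean > 3
  obtain ⟨K, hK⟩ : ∃ K : ℕ, ENNReal.ofReal 3 < ∫⁻ x, ENNReal.ofReal (min (W 0 x) K) ∂μ := by
    have hmeas : ∀ K : ℕ, Measurable fun x => ENNReal.ofReal (min (W 0 x) (K:ℝ)) :=
      fun K => ((hW_meas 0).min measurable_const).ennreal_ofReal
    have hmono : Monotone fun (K:ℕ) => fun x => ENNReal.ofReal (min (W 0 x) (K:ℝ)) := by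
      intro K L hKL x
      exact ENNReal.ofReal_le_ofReal (min_le_min le_rfl (by exact_mod_cast hKL))
    have hpt : ∀ x, (⨆ K : ℕ, ENNReal.ofReal (min (W 0 x) (K:ℝ))) = ENNReal.ofReal (W 0 x) := by
      intro x
      apply le_antisymm
      · exact iSup_le fun K => ENNReal.ofReal_le_ofReal (min_le_left _ _)
      · exact le_iSup_of_le ⌈W 0 x⌉₊ (le_of_eq (by rw [min_eq_left (Nat.le_ceil _)]))
    have hsup : (⨆ K : ℕ, ∫⁻ x, ENNReal.ofReal (min (W 0 x) (K:ℝ)) ∂μ) = ⊤ := by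
      rw [← lintegral_iSup hmeas hmono]
      rw [← hW_infinite_mean]
      exact lintegral_congr hpt
    have : ENNReal.ofReal 3 < ⨆ K : ℕ, ∫⁻ x, ENNReal.ofReal (min (W 0 x) (K:ℝ)) ∂μ := by
      rw [hsup]; exact ENNReal.ofReal_lt_top
    exact lt_iSup_iff.mp this
  set V : ℕ → Ω → ℝ := fun i x => min (W i x) K with hV
  have hV_meas : ∀ i, Measurable (V i) := fun i => (hW_meas i).min measurable_const
  have hV_nonneg : ∀ i x, 0 ≤ V i x := fun i x =>
    le_min (hW_nonneg i x) (by positivity)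
  have hV_int : Integrable (V 0) μ := by
    refine Integrable.mono' (integrable_const (K:ℝ)) (hV_meas 0).aestronglyMeasurable
      (ae_of_all _ fun x => ?_)
    rw [Real.norm_of_nonneg (hV_nonneg 0 x)]
    exact min_le_right _ _
  have hV_indep : Pairwise (Function.onFun (IndepFun · · μ) V) := by
    have h := hW_indep.comp (fun _ => fun y => min y (K:ℝ))
      (fun _ => measurable_id.min measurable_const)
    exact fun i j hij => h.indepFun hij
  have hV_ident : ∀ i, IdentDistrib (V i) (V 0) μ μ := fun i =>
    (hW_ident i).comp (measurable_id.min measurable_const)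
  -- the truncated mean is at least 3
  have hfin : ∫⁻ x, ENNReal.ofReal (V 0 x) ∂μ ≠ ⊤ := by
    have : ∫⁻ x, ENNReal.ofReal (V 0 x) ∂μ ≤ ENNReal.ofReal K := by
      calc ∫⁻ x, ENNReal.ofReal (V 0 x) ∂μ
          ≤ ∫⁻ _, ENNReal.ofReal (K:ℝ) ∂μ :=
            lintegral_mono fun x => ENNReal.ofReal_le_ofReal (min_le_right _ _)
        _ = ENNReal.ofReal K := by simp
    exact ne_top_of_le_ne_top ENNReal.ofReal_ne_top this
  have hmean : (3:ℝ) ≤ ∫ x, V 0 x ∂μ := by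
    rw [integral_eq_lintegral_of_nonneg_ae (ae_of_all _ (hV_nonneg 0))
      (hV_meas 0).aestronglyMeasurable]
    rw [← ENNReal.ofReal_le_iff_le_toReal hfin]
    exact hK.le
  -- Step 2: SLLN for truncated variables ⇒ μ (A n) → 0
  have hslln := strong_law_ae_real V hV_int hV_indep hV_ident
  have hfloor : Tendsto (fun n => ⌊a ^ n⌋₊) atTop atTop :=
    tendsto_nat_floor_atTop.comp (tendsto_pow_atTop_atTop_of_one_lt ha)
  have h_lim : ∀ᵐ x ∂μ, ∀ᶠ n in atTop, x ∈ A n ↔ x ∈ (∅ : Set Ω) := by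
    filter_upwards [hslln] with x hx
    simp only [mem_empty_iff_false, iff_false]
    have h2 : ∀ᶠ N : ℕ in atTop, 2 < (∑ i ∈ Finset.range N, V i x) / (N:ℝ) :=
      hx.eventually (eventually_gt_nhds (by linarith))
    filter_upwards [hfloor.eventually h2, hfloor.eventually (eventually_ge_atTop 1)]
      with n hn h1
    intro hmem
    have hmem' : ∑ i ∈ Finset.range ⌊a ^ n⌋₊, W i x ≤ a ^ n := hmem
    set N := ⌊a ^ n⌋₊ with hN
    have hNpos : (0:ℝ) < (N:ℝ) := by exact_mod_cast h1
    rw [lt_div_iff₀ hNpos] at hn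
    have hVW : ∑ i ∈ Finset.range N, V i x ≤ ∑ i ∈ Finset.range N, W i x :=
      Finset.sum_le_sum fun i _ => min_le_left _ _
    have hflt : a ^ n < (N:ℝ) + 1 := Nat.lt_floor_add_one (a ^ n)
    have h1' : (1:ℝ) ≤ (N:ℝ) := by exact_mod_cast h1
    linarith
  have hmeas_tendsto : Tendsto (fun n => μ (A n)) atTop (𝓝 (μ (∅ : Set Ω))) :=
    tendsto_measure_of_ae_tendsto_indicator_of_isFiniteMeasure atTop MeasurableSet.empty
      hA_mble h_lim
  rw [measure_empty] at hmeas_tendsto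
  have hP : Tendsto (fun n => (μ (A n)).toReal) atTop (𝓝 0) := by
    have := (ENNReal.tendsto_toReal (by simp : (0:ℝ≥0∞) ≠ ⊤)).comp hmeas_tendsto
    simpa [Function.comp_def] using this
  -- Step 3: the exponential factor tends to 1
  have hexp : Tendsto (fun n => Real.exp ((b ^ n - 1) / c n)) atTop (𝓝 1) := by
    obtain ⟨r, hbr, hrm⟩ : ∃ r : ℝ, b < r ∧ r < m := ⟨(b + m) / 2, by linarith, by linarith⟩
    have hr1 : 1 < r := lt_trans hb hbr
    have hr0 : 0 < r := lt_trans one_pos hr1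
    obtain ⟨N, hNr⟩ : ∃ N, ∀ n ≥ N, r * c n ≤ c (n + 1) := by
      have := hc_ratio.eventually (eventually_ge_nhds hrm)
      rw [eventually_atTop] at this
      obtain ⟨N, hN⟩ := this
      refine ⟨N, fun n hn => ?_⟩
      have h := hN n hn
      rw [le_div_iff₀ (hc_pos n)] at h
      linarith
    have hgrow : ∀ n, N ≤ n → c N * r ^ (n - N) ≤ c n := by
      intro n hn
      induction n, hn using Nat.le_induction with
      | base => simp
      | succ n hn ih =>
        have h1 := hNr n hn
        have h2 : n + 1 - N = (n - N) + 1 := by omega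
        rw [h2, pow_succ]
        calc c N * (r ^ (n - N) * r) = r * (c N * r ^ (n - N)) := by ring
          _ ≤ r * c n := by nlinarith
          _ ≤ c (n + 1) := h1
    have hupper : Tendsto (fun n => (c N)⁻¹ * r ^ N * (b / r) ^ n) atTop (𝓝 0) := by
      have h0 : Tendsto (fun n : ℕ => (b / r) ^ n) atTop (𝓝 0) :=
        tendsto_pow_atTop_nhds_zero_of_lt_one (div_nonneg hb0.le hr0.le) ((div_lt_one hr0).mpr hbr)
      simpa using h0.const_mul ((c N)⁻¹ * r ^ N)
    have hmain : Tendsto (fun n => (b ^ n - 1) / c n) atTop (𝓝 0) := by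
      apply squeeze_zero' ?_ ?_ hupper
      · filter_upwards with n
        have : (1:ℝ) ≤ b ^ n := one_le_pow₀ hb.le
        exact div_nonneg (by linarith) (hc_pos n).le
      · filter_upwards [eventually_ge_atTop N] with n hn
        have hcn := hc_pos n
        have hcNr : 0 < c N * r ^ (n - N) := mul_pos (hc_pos N) (pow_pos hr0 _)
        calc (b ^ n - 1) / c n ≤ b ^ n / c n := by gcongr; linarith
          _ ≤ b ^ n / (c N * r ^ (n - N)) :=
              div_le_div_of_nonneg_left (pow_nonneg hb0.le n) hcNr (hgrow n hn)
          _ = (c N)⁻¹ * r ^ N * (b / r) ^ n := by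
              rw [pow_sub₀ r (ne_of_gt hr0) hn, div_pow]
              have hcN0 : c N ≠ 0 := (hc_pos N).ne'
              have hrn : (r:ℝ) ^ n ≠ 0 := by positivity
              have hrN : (r:ℝ) ^ N ≠ 0 := by positivity
              field_simp
    have := (Real.continuous_exp.tendsto 0).comp hmain
    simpa [Function.comp_def] using this
  have := hexp.mul hP
  simpa using this
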